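/- Let n, q ≥ 1, let Θ_1, …, Θ_q be n×n real matrices, and let F be the block companion matrix of (Θ_1, …, Θ_q). Suppose F = T · Λ · T⁻¹ where T is an invertible (nq)×(nq) real matrix and Λ is an (nq)×(nq) real diagonal matrix whose diagonal entries all have absolute value at most λ for some λ ≥ 0; set κ = ‖T‖₂ · ‖T⁻¹‖₂. Suppose y : ℤ → ℝ^n satisfies y_t = −∑_{i=1}^q Θ_i · y_{t−i} for every integer t ≥ 1, and suppose c ≥ 0 is such that ‖y_{−i}‖₂ ≤ c for every i = 0, 1, …, q−1. Then for every integer m ≥ 0, ‖y_m‖₂ ≤ κ · λ^m · c · √q. -/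

import Mathlib

/-- The block companion matrix of `n×n` real matrices `Θ 0, …, Θ (q-1)` (representing
Θ_1, …, Θ_q), indexed by pairs `(block index, within-block index)`: the first block row is
`(-Θ_1, …, -Θ_q)`, the block in position `(i+1, i)` is the identity, all other blocks are `0`. -/
def blockCompanionMatrix {n q : ℕ} (Θ : Fin q → Matrix (Fin n) (Fin n) ℝ) :
    Matrix (Fin q × Fin n) (Fin q × Fin n) ℝ :=
  fun p r =>
    if (p.1 : ℕ) = 0 then -Θ r.1 p.2 r.2
    else if (p.1 : ℕ) = (r.1 : ℕ) + 1 then (if p.2 = r.2 then 1 else 0)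
    else 0

/-- The Euclidean (ℓ²) norm of a real vector indexed by a finite type. -/
noncomputable def euclNorm {ι : Type*} [Fintype ι] (v : ι → ℝ) : ℝ :=
  ‖(WithLp.equiv 2 (ι → ℝ)).symm v‖

/-- The operator norm of a square real matrix induced by the Euclidean norm
(i.e. its largest singular value). -/
noncomputable def matrixOpNorm {ι : Type*} [Fintype ι] [DecidableEq ι]
    (A : Matrix ι ι ℝ) : ℝ :=
  ‖Matrix.toEuclideanCLM (𝕜 := ℝ) A‖

lemma euclNorm_eq {ι : Type*} [Fintype ι] (v : ι → ℝ) :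
    euclNorm v = Real.sqrt (∑ i, v i ^ 2) := by
  rw [euclNorm, EuclideanSpace.norm_eq]
  simp [sq_abs]

lemma euclNorm_nonneg {ι : Type*} [Fintype ι] (v : ι → ℝ) : 0 ≤ euclNorm v :=
  norm_nonneg _

lemma euclNorm_mulVec_le {ι : Type*} [Fintype ι] [DecidableEq ι]
    (A : Matrix ι ι ℝ) (v : ι → ℝ) :
    euclNorm (A.mulVec v) ≤ matrixOpNorm A * euclNorm v := by
  have h := Matrix.toEuclideanCLM_toLp (𝕜 := ℝ) A v
  calc euclNorm (A.mulVec v)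
      = ‖Matrix.toEuclideanCLM (𝕜 := ℝ) A ((WithLp.equiv 2 (ι → ℝ)).symm v)‖ := by exact congrArg norm h.symm
    _ ≤ matrixOpNorm A * euclNorm v := ContinuousLinearMap.le_opNorm _ _

lemma euclNorm_diag_le {ι : Type*} [Fintype ι] [DecidableEq ι]
    (d : ι → ℝ) (lam : ℝ) (hlam : 0 ≤ lam) (hd : ∀ i, |d i| ≤ lam) (v : ι → ℝ) :
    euclNorm ((Matrix.diagonal d).mulVec v) ≤ lam * euclNorm v := by
  rw [euclNorm_eq, euclNorm_eq]
  rw [show lam * Real.sqrt (∑ i, v i ^ 2) = Real.sqrt (lam ^ 2 * ∑ i, v i ^ 2) by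
    rw [Real.sqrt_mul (by positivity), Real.sqrt_sq hlam]]
  apply Real.sqrt_le_sqrt
  rw [Finset.mul_sum]
  apply Finset.sum_le_sum
  intro i _
  simp only [Matrix.mulVec_diagonal]
  rw [mul_pow]
  apply mul_le_mul_of_nonneg_right _ (sq_nonneg _)
  calc d i ^ 2 = |d i| ^ 2 := (sq_abs _).symm
    _ ≤ lam ^ 2 := by apply pow_le_pow_left₀ (abs_nonneg _) (hd i)

theorem stmt_7 {n q : ℕ} (hn : 1 ≤ n) (hq : 1 ≤ q)
    (Θ : Fin q → Matrix (Fin n) (Fin n) ℝ)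
    (T Λ : Matrix (Fin q × Fin n) (Fin q × Fin n) ℝ)
    (d : Fin q × Fin n → ℝ) (lam κ c : ℝ)
    (hlam : 0 ≤ lam) (hT : IsUnit T) (hΛ : Λ = Matrix.diagonal d)
    (hd : ∀ i, |d i| ≤ lam)
    (hF : blockCompanionMatrix Θ = T * Λ * T⁻¹)
    (hκ : κ = matrixOpNorm T * matrixOpNorm T⁻¹)
    (y : ℤ → Fin n → ℝ)
    (hy : ∀ t : ℤ, 1 ≤ t →
      y t = -∑ i : Fin q, (Θ i).mulVec (y (t - ((i : ℕ) + 1))))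
    (hc : 0 ≤ c) (hyc : ∀ i : Fin q, euclNorm (y (-(i : ℕ))) ≤ c) :
    ∀ m : ℤ, 0 ≤ m →
      euclNorm (y m) ≤ κ * lam ^ m.toNat * c * Real.sqrt q := by
  set F := blockCompanionMatrix Θ with hFdef
  set Y : ℕ → (Fin q × Fin n → ℝ) := fun m p => y ((m : ℤ) - (p.1 : ℕ)) p.2 with hY
  -- step relation
  have step : ∀ m : ℕ, Y (m + 1) = F.mulVec (Y m) := by
    intro m
    funext p
    obtain ⟨i, j⟩ := p
    simp only [hY, Matrix.mulVec, dotProduct, hFdef, blockCompanionMatrix]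
    rw [Fintype.sum_prod_type]
    by_cases hi : (i : ℕ) = 0
    · simp only [hi, if_true]
      have h1 := hy ((m : ℤ) + 1) (by omega)
      have harg : ∀ k : Fin q, ((m : ℤ) + 1 - ((k : ℕ) + 1)) = (m : ℤ) - (k : ℕ) := by
        intro k; ring
      have e0 : ((m + 1 : ℕ) : ℤ) - ((0 : ℕ) : ℤ) = (m : ℤ) + 1 := by push_cast; ring
      rw [e0, h1]
      simp only [Pi.neg_apply, Finset.sum_apply, Matrix.mulVec, dotProduct, harg,
        neg_mul, Finset.sum_neg_distrib]
    · obtain ⟨k, hk⟩ : ∃ k : ℕ, (i : ℕ) = k + 1 := ⟨(i : ℕ) - 1, by omega⟩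
      have hkq : k < q := by have := i.isLt; omega
      simp only [hi, if_false]
      have hcond : ∀ r1 : Fin q, ((i : ℕ) = (r1 : ℕ) + 1) ↔ r1 = ⟨k, hkq⟩ := by
        intro r1
        constructor
        · intro h; apply Fin.ext; simp; omega
        · intro h; subst h; simpa using hk
      simp only [hcond]
      rw [Finset.sum_eq_single (⟨k, hkq⟩ : Fin q)
        (fun b _ hb => by simp [if_neg hb])
        (fun h => absurd (Finset.mem_univ _) h)]
      simp only [if_true, ite_mul, one_mul, zero_mul, Finset.sum_ite_eq, Finset.mem_univ,
        if_pos rfl]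
      have e1 : ((m + 1 : ℕ) : ℤ) - ((i : ℕ) : ℤ) = (m : ℤ) - ((k : ℕ) : ℤ) := by
        rw [hk]; push_cast; ring
      rw [e1]
  -- iterate
  have hdet : IsUnit T.det := (Matrix.isUnit_iff_isUnit_det T).mp hT
  have hinv : T⁻¹ * T = 1 := Matrix.nonsing_inv_mul T hdet
  have pow_eq : ∀ m : ℕ, F ^ m = T * Λ ^ m * T⁻¹ := by
    intro m
    induction m with
    | zero => simp [Matrix.mul_nonsing_inv T hdet]
    | succ m ih =>
        rw [pow_succ, ih, hF, pow_succ]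
        calc T * Λ ^ m * T⁻¹ * (T * Λ * T⁻¹)
            = T * Λ ^ m * (T⁻¹ * T) * Λ * T⁻¹ := by noncomm_ring
          _ = T * (Λ ^ m * Λ) * T⁻¹ := by rw [hinv]; noncomm_ring
  have iter : ∀ m : ℕ, Y m = (F ^ m).mulVec (Y 0) := by
    intro m
    induction m with
    | zero => simp
    | succ m ih => rw [step m, ih, Matrix.mulVec_mulVec, ← pow_succ']
  -- norm of Y 0
  have hY0 : euclNorm (Y 0) ≤ c * Real.sqrt q := by
    rw [euclNorm_eq, Fintype.sum_prod_type]
    rw [show c * Real.sqrt q = Real.sqrt (q * c ^ 2) by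
      rw [Real.sqrt_mul (by positivity), Real.sqrt_sq hc, mul_comm]]
    apply Real.sqrt_le_sqrt
    calc ∑ i : Fin q, ∑ j : Fin n, Y 0 (i, j) ^ 2
        ≤ ∑ i : Fin q, c ^ 2 := by
          apply Finset.sum_le_sum
          intro i _
          have h1 : ∑ j : Fin n, Y 0 (i, j) ^ 2 = euclNorm (y (-(i : ℕ))) ^ 2 := by
            rw [euclNorm_eq, Real.sq_sqrt (by positivity)]
            simp [hY]
          rw [h1]
          exact pow_le_pow_left₀ (euclNorm_nonneg _) (hyc i) 2
      _ = q * c ^ 2 := by simp [mul_comm]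
  -- component bound
  have hcomp : ∀ m : ℕ, euclNorm (y (m : ℤ)) ≤ euclNorm (Y m) := by
    intro m
    rw [euclNorm_eq, euclNorm_eq, Fintype.sum_prod_type]
    apply Real.sqrt_le_sqrt
    have h0 : (⟨0, hq⟩ : Fin q) ∈ (Finset.univ : Finset (Fin q)) := Finset.mem_univ _
    calc ∑ j : Fin n, y (m : ℤ) j ^ 2
        = ∑ j : Fin n, Y m ((⟨0, hq⟩ : Fin q), j) ^ 2 := by
          apply Finset.sum_congr rfl
          intro j _
          simp [hY]
      _ ≤ ∑ i : Fin q, ∑ j : Fin n, Y m (i, j) ^ 2 := by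
          apply Finset.single_le_sum (f := fun i : Fin q => ∑ j : Fin n, Y m (i, j) ^ 2)
            (fun i _ => by positivity) h0
  -- main bound
  intro m hm
  obtain ⟨N, rfl⟩ : ∃ N : ℕ, m = (N : ℤ) := ⟨m.toNat, by omega⟩
  rw [Int.toNat_natCast]
  calc euclNorm (y (N : ℤ)) ≤ euclNorm (Y N) := hcomp N
    _ = euclNorm ((T * (Λ ^ N * T⁻¹)).mulVec (Y 0)) := by rw [iter N, pow_eq N, mul_assoc]
    _ = euclNorm (T.mulVec ((Λ ^ N * T⁻¹).mulVec (Y 0))) := by rw [Matrix.mulVec_mulVec]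
    _ ≤ matrixOpNorm T * euclNorm ((Λ ^ N * T⁻¹).mulVec (Y 0)) := euclNorm_mulVec_le _ _
    _ ≤ matrixOpNorm T * (lam ^ N * euclNorm (T⁻¹.mulVec (Y 0))) := by
        apply mul_le_mul_of_nonneg_left _ (norm_nonneg _)
        rw [← Matrix.mulVec_mulVec]
        have : Λ ^ N = Matrix.diagonal (fun i => d i ^ N) := by
          rw [hΛ, Matrix.diagonal_pow]
          congr 1
        rw [this]
        exact euclNorm_diag_le _ _ (by positivity) (fun i => by
          rw [abs_pow]; exact pow_le_pow_left₀ (abs_nonneg _) (hd i) N) _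
    _ ≤ matrixOpNorm T * (lam ^ N * (matrixOpNorm T⁻¹ * euclNorm (Y 0))) := by
        apply mul_le_mul_of_nonneg_left _ (norm_nonneg _)
        exact mul_le_mul_of_nonneg_left (euclNorm_mulVec_le _ _) (by positivity)
    _ ≤ matrixOpNorm T * (lam ^ N * (matrixOpNorm T⁻¹ * (c * Real.sqrt q))) := by
        apply mul_le_mul_of_nonneg_left _ (norm_nonneg _)
        apply mul_le_mul_of_nonneg_left _ (by positivity)
        exact mul_le_mul_of_nonneg_left hY0 (norm_nonneg _)
    _ = κ * lam ^ N * c * Real.sqrt q := by rw [hκ]; ring
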